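/- Let $k \ge 2$, $m = 2k$. There do not exist $r \in \mathbb{N}$ and real numbers $a_1, b_1, \ldots, a_r, b_r$ such that for all real $x_1, x_2$: $x_1^m - \sum_{j=1}^{k-1} x_1^{m-2j} x_2^{2j} + x_2^m = \sum_{p=1}^r (a_p x_1 + b_p x_2)^m$. -/

import Mathlib

lemma key_pow_ineq (k : ℕ) (a c : ℝ) :
    2 * a ^ (2 * k) ≤ (a + c) ^ (2 * k) + (a - c) ^ (2 * k) := by
  have h := Even.add_pow_le (n := 2 * k) (a := a + c) (b := a - c)
    (even_two_mul k)
  have h2 : ((a + c) + (a - c)) ^ (2 * k) = 2 ^ (2 * k) * a ^ (2 * k) := by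
    rw [show a + c + (a - c) = 2 * a by ring, mul_pow]
  rw [h2] at h
  rcases Nat.eq_zero_or_pos k with rfl | hk
  · norm_num at h ⊢
  have hpow : (2 : ℝ) ^ (2 * k) = 2 ^ (2 * k - 1) * 2 := by
    rw [← pow_succ]
    congr 1
    omega
  rw [hpow, mul_assoc] at h
  have h2k : (0:ℝ) < 2 ^ (2 * k - 1) := by positivity
  nlinarith [h]

theorem stmt_13 (k : ℕ) (hk : 2 ≤ k) :
    ¬ ∃ (r : ℕ) (a b : Fin r → ℝ),
      ∀ x1 x2 : ℝ,
        x1 ^ (2 * k) - (∑ j ∈ Finset.Icc 1 (k - 1), x1 ^ (2 * k - 2 * j) * x2 ^ (2 * j)) +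
            x2 ^ (2 * k) =
          ∑ p, (a p * x1 + b p * x2) ^ (2 * k) := by
  rintro ⟨r, a, b, h⟩
  have h0 := h 1 0
  have h1 := h 1 (1/2)
  have h2 := h 1 (-(1/2))
  simp only [one_pow, mul_one, one_mul, mul_zero, add_zero] at h0 h1 h2
  have hz : ∑ j ∈ Finset.Icc 1 (k - 1), (0:ℝ) ^ (2 * j) = 0 := by
    apply Finset.sum_eq_zero
    intro j hj
    rw [Finset.mem_Icc] at hj
    exact zero_pow (by omega)
  rw [hz, zero_pow (by omega : 2 * k ≠ 0)] at h0
  have h0' : ∑ p, (a p) ^ (2 * k) = 1 := by linarith [h0]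
  -- the negatives cancel
  have hneg : ∀ j : ℕ, (-(1/2) : ℝ) ^ (2 * j) = (1/2 : ℝ) ^ (2 * j) := by
    intro j
    rw [pow_mul, pow_mul, neg_pow, neg_one_sq, one_mul]
  simp only [hneg] at h1 h2
  set S : ℝ := ∑ j ∈ Finset.Icc 1 (k - 1), (1/2 : ℝ) ^ (2 * j) with hS
  set Q : ℝ := (1/2 : ℝ) ^ (2 * k) with hQ
  -- S > Q
  have hSQ : Q < S := by
    have hmem : k - 1 ∈ Finset.Icc 1 (k - 1) := by
      rw [Finset.mem_Icc]; omega
    have hle : (1/2 : ℝ) ^ (2 * (k - 1)) ≤ S := by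
      apply Finset.single_le_sum (f := fun j => (1/2 : ℝ) ^ (2 * j)) _ hmem
      intro i _; positivity
    have hlt : (1/2 : ℝ) ^ (2 * k) < (1/2 : ℝ) ^ (2 * (k - 1)) := by
      apply pow_lt_pow_right_of_lt_one₀ (by norm_num) (by norm_num)
      omega
    calc Q < (1/2 : ℝ) ^ (2 * (k - 1)) := hlt
      _ ≤ S := hle
  -- sum inequality
  have hsum : ∑ p, 2 * (a p) ^ (2 * k) ≤
      ∑ p, ((a p + b p * (1/2)) ^ (2 * k) + (a p + b p * (-(1/2))) ^ (2 * k)) := by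
    apply Finset.sum_le_sum
    intro p _
    have := key_pow_ineq k (a p) (b p * (1/2))
    have heq : a p + b p * (-(1/2)) = a p - b p * (1/2) := by ring
    rw [heq]
    exact this
  rw [Finset.sum_add_distrib, ← h1, ← h2, ← Finset.mul_sum, h0'] at hsum
  -- now hsum : 2 * 1 ≤ (1 - S + Q) + (1 - S + Q)
  linarith
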